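/- For all i ∈ {1, 2, 3, 4} and j ∈ {1, 2, 3}, the third directional derivative of the Morley bubble φ_M^i along t_j, i.e. the constant value D³φ_M^i[t_j, t_j, t_j], equals −6/|e_j|³ if i = j and equals 0 otherwise. -/

import Mathlib

noncomputable section
open MeasureTheory

namespace PaperStmt

/-- Euclidean dot product on `ℝ²`. -/
def dotp (v w : ℝ × ℝ) : ℝ := v.1 * w.1 + v.2 * w.2

/-- Euclidean length on `ℝ²`. -/
def len (v : ℝ × ℝ) : ℝ := Real.sqrt (v.1 ^ 2 + v.2 ^ 2)

/-- Cross product (determinant) of two planar vectors. -/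
def crossp (v w : ℝ × ℝ) : ℝ := v.1 * w.2 - v.2 * w.1

/-- The vertices `p 0, p 1, p 2` form a nondegenerate triangle listed counterclockwise. -/
def Ccw (p : Fin 3 → ℝ × ℝ) : Prop := 0 < crossp (p 1 - p 0) (p 2 - p 0)

/-- Vector of the edge `e_i` opposite vertex `p i`, oriented counterclockwise
(from `p (i+1)` to `p (i−1)`). -/
def edgeVec (p : Fin 3 → ℝ × ℝ) (i : Fin 3) : ℝ × ℝ := p (i - 1) - p (i + 1)

/-- Length `|e_i|` of the edge opposite vertex `p i`. -/
def elen (p : Fin 3 → ℝ × ℝ) (i : Fin 3) : ℝ := len (edgeVec p i)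

/-- Unit tangent `t_i = (p_{i−1} − p_{i+1})/|e_i|` of edge `e_i`. -/
def tvec (p : Fin 3 → ℝ × ℝ) (i : Fin 3) : ℝ × ℝ := (elen p i)⁻¹ • edgeVec p i

/-- Outward unit normal `n_i` of edge `e_i` (clockwise rotation of the tangent,
which points outward for a counterclockwise triangle). -/
def nvec (p : Fin 3 → ℝ × ℝ) (i : Fin 3) : ℝ × ℝ := ((tvec p i).2, -(tvec p i).1)

/-- Interior angle `θ_i` of the triangle at the vertex `p i`. -/
def angleAt (p : Fin 3 → ℝ × ℝ) (i : Fin 3) : ℝ :=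
  Real.arccos (dotp (p (i + 1) - p i) (p (i - 1) - p i) /
    (len (p (i + 1) - p i) * len (p (i - 1) - p i)))

/-- Outer product `v wᵀ` of two planar (column) vectors, as a `2 × 2` matrix. -/
def outerProd (v w : ℝ × ℝ) : Matrix (Fin 2) (Fin 2) ℝ :=
  !![v.1 * w.1, v.1 * w.2; v.2 * w.1, v.2 * w.2]

/-- Basis matrices `φ_HHJ^i = −(1/(2 sin θ_{i−1} sin θ_{i+1})) (t_{i−1} t_{i+1}ᵀ + t_{i+1} t_{i−1}ᵀ)`
of the lowest-order Hellan–Herrmann–Johnson element. -/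
def phiHHJ (p : Fin 3 → ℝ × ℝ) (i : Fin 3) : Matrix (Fin 2) (Fin 2) ℝ :=
  (-(2 * Real.sin (angleAt p (i - 1)) * Real.sin (angleAt p (i + 1)))⁻¹) •
    (outerProd (tvec p (i - 1)) (tvec p (i + 1)) + outerProd (tvec p (i + 1)) (tvec p (i - 1)))

/-- The quadratic form `vᵀ τ v` of a `2 × 2` matrix on a planar vector. -/
def qf (τ : Matrix (Fin 2) (Fin 2) ℝ) (v : ℝ × ℝ) : ℝ :=
  v.1 * (τ 0 0 * v.1 + τ 0 1 * v.2) + v.2 * (τ 1 0 * v.1 + τ 1 1 * v.2)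

end PaperStmt

namespace PaperStmt

/-- Directional derivative of `f` along `v`. -/
def dderiv (v : ℝ × ℝ) (f : ℝ × ℝ → ℝ) : ℝ × ℝ → ℝ := fun x => fderiv ℝ f x v

/-- Second directional derivative `D²f[u, v]`. -/
def d2 (u v : ℝ × ℝ) (f : ℝ × ℝ → ℝ) : ℝ × ℝ → ℝ := dderiv u (dderiv v f)

/-- Third directional derivative `D³f[u, v, w]`. -/
def d3 (u v w : ℝ × ℝ) (f : ℝ × ℝ → ℝ) : ℝ × ℝ → ℝ := dderiv u (dderiv v (dderiv w f))

/-- `ψ` is the family of barycentric coordinates of the triangle with vertices `p`: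
affine functions with `ψ i (p j) = δ_{ij}`. -/
def IsBarycentric (p : Fin 3 → ℝ × ℝ) (ψ : Fin 3 → ℝ × ℝ → ℝ) : Prop :=
  (∀ i : Fin 3, ∃ a b c : ℝ, ∀ x : ℝ × ℝ, ψ i x = a * x.1 + b * x.2 + c) ∧
  (∀ i j : Fin 3, ψ i (p j) = if i = j then 1 else 0)

/-- Morley bubble `φ_M^i = ψ_{i−1}² ψ_{i+1}` for `i = 1, 2, 3`. -/
def phiM3 (ψ : Fin 3 → ℝ × ℝ → ℝ) (i : Fin 3) : ℝ × ℝ → ℝ :=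
  fun x => (ψ (i - 1) x) ^ 2 * ψ (i + 1) x

/-- Morley bubble `φ_M^4 = ψ₁ ψ₂ ψ₃`. -/
def phiM4 (ψ : Fin 3 → ℝ × ℝ → ℝ) : ℝ × ℝ → ℝ :=
  fun x => ψ 0 x * ψ 1 x * ψ 2 x

/-- The four Morley bubbles `φ_M^1, φ_M^2, φ_M^3, φ_M^4`. -/
def phiM (ψ : Fin 3 → ℝ × ℝ → ℝ) : Fin 4 → ℝ × ℝ → ℝ :=
  ![phiM3 ψ 0, phiM3 ψ 1, phiM3 ψ 2, phiM4 ψ]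

end PaperStmt


namespace PaperStmt

lemma hasFDerivAt_aff (a b c : ℝ) (x : ℝ × ℝ) :
    HasFDerivAt (fun y : ℝ × ℝ => a * y.1 + b * y.2 + c)
      (a • ContinuousLinearMap.fst ℝ ℝ ℝ + b • ContinuousLinearMap.snd ℝ ℝ ℝ) x := by
  have h1 : HasFDerivAt (fun y : ℝ × ℝ => y.1) (ContinuousLinearMap.fst ℝ ℝ ℝ) x :=
    (ContinuousLinearMap.fst ℝ ℝ ℝ).hasFDerivAt
  have h2 : HasFDerivAt (fun y : ℝ × ℝ => y.2) (ContinuousLinearMap.snd ℝ ℝ ℝ) x :=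
    (ContinuousLinearMap.snd ℝ ℝ ℝ).hasFDerivAt
  exact ((h1.const_mul a).add (h2.const_mul b)).add_const c

lemma diff_aff (a b c : ℝ) : Differentiable ℝ (fun y : ℝ × ℝ => a * y.1 + b * y.2 + c) :=
  fun x => (hasFDerivAt_aff a b c x).differentiableAt

lemma dderiv_aff (a b c : ℝ) (v x : ℝ × ℝ) :
    dderiv v (fun y : ℝ × ℝ => a * y.1 + b * y.2 + c) x = a * v.1 + b * v.2 := by
  rw [dderiv, (hasFDerivAt_aff a b c x).fderiv]
  simp

lemma dderiv_mul {f g : ℝ × ℝ → ℝ} (hf : Differentiable ℝ f) (hg : Differentiable ℝ g)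
    (v x : ℝ × ℝ) :
    dderiv v (fun y => f y * g y) x = dderiv v f x * g x + f x * dderiv v g x := by
  simp only [dderiv]
  rw [fderiv_fun_mul (hf x) (hg x)]
  simp
  ring

lemma dderiv_add {f g : ℝ × ℝ → ℝ} (hf : Differentiable ℝ f) (hg : Differentiable ℝ g)
    (v x : ℝ × ℝ) :
    dderiv v (fun y => f y + g y) x = dderiv v f x + dderiv v g x := by
  simp only [dderiv]
  rw [fderiv_fun_add (hf x) (hg x)]
  simp

lemma dderiv_const_mul {f : ℝ × ℝ → ℝ} (hf : Differentiable ℝ f) (c : ℝ) (v x : ℝ × ℝ) :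
    dderiv v (fun y => c * f y) x = c * dderiv v f x := by
  simp only [dderiv]
  rw [fderiv_const_mul (hf x) c]
  simp

lemma d3_triple (a1 b1 c1 a2 b2 c2 a3 b3 c3 : ℝ) (v x : ℝ × ℝ) :
    d3 v v v (fun y : ℝ × ℝ =>
      (a1*y.1+b1*y.2+c1) * (a2*y.1+b2*y.2+c2) * (a3*y.1+b3*y.2+c3)) x
    = 6 * (a1*v.1+b1*v.2) * (a2*v.1+b2*v.2) * (a3*v.1+b3*v.2) := by
  set D1 := a1*v.1+b1*v.2 with hD1
  set D2 := a2*v.1+b2*v.2 with hD2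
  set D3 := a3*v.1+b3*v.2 with hD3
  have H1 : dderiv v (fun y : ℝ × ℝ =>
      (a1*y.1+b1*y.2+c1) * (a2*y.1+b2*y.2+c2) * (a3*y.1+b3*y.2+c3))
      = fun y : ℝ × ℝ => D1 * ((a2*y.1+b2*y.2+c2) * (a3*y.1+b3*y.2+c3))
        + (D2 * ((a1*y.1+b1*y.2+c1) * (a3*y.1+b3*y.2+c3))
        + D3 * ((a1*y.1+b1*y.2+c1) * (a2*y.1+b2*y.2+c2))) := by
    funext y
    rw [dderiv_mul (by fun_prop) (diff_aff a3 b3 c3),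
        dderiv_mul (diff_aff a1 b1 c1) (diff_aff a2 b2 c2),
        dderiv_aff, dderiv_aff, dderiv_aff]
    ring
  have H2 : dderiv v (fun y : ℝ × ℝ => D1 * ((a2*y.1+b2*y.2+c2) * (a3*y.1+b3*y.2+c3))
        + (D2 * ((a1*y.1+b1*y.2+c1) * (a3*y.1+b3*y.2+c3))
        + D3 * ((a1*y.1+b1*y.2+c1) * (a2*y.1+b2*y.2+c2))))
      = fun y : ℝ × ℝ => (2*(D1*D2)) * (a3*y.1+b3*y.2+c3)
        + ((2*(D1*D3)) * (a2*y.1+b2*y.2+c2) + (2*(D2*D3)) * (a1*y.1+b1*y.2+c1)) := by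
    funext y
    rw [dderiv_add (by fun_prop) (by fun_prop),
        dderiv_add (by fun_prop) (by fun_prop),
        dderiv_const_mul (by fun_prop),
        dderiv_const_mul (by fun_prop),
        dderiv_const_mul (by fun_prop),
        dderiv_mul (diff_aff a2 b2 c2) (diff_aff a3 b3 c3),
        dderiv_mul (diff_aff a1 b1 c1) (diff_aff a3 b3 c3),
        dderiv_mul (diff_aff a1 b1 c1) (diff_aff a2 b2 c2),
        dderiv_aff, dderiv_aff, dderiv_aff]
    ring
  show dderiv v (dderiv v (dderiv v _)) x = _
  rw [H1, H2]
  rw [dderiv_add (by fun_prop) (by fun_prop),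
      dderiv_add (by fun_prop) (by fun_prop),
      dderiv_const_mul (diff_aff a3 b3 c3),
      dderiv_const_mul (diff_aff a2 b2 c2),
      dderiv_const_mul (diff_aff a1 b1 c1),
      dderiv_aff, dderiv_aff, dderiv_aff]
  ring

end PaperStmt

open PaperStmt in
/-- The third directional derivative of the Morley bubble `φ_M^i` along the tangent `t_j`
is the constant `−6/|e_j|³` if `i = j` and `0` otherwise. -/
theorem morley_bubble_third_deriv_tangent
    (p : Fin 3 → ℝ × ℝ) (hp : Ccw p)
    (ψ : Fin 3 → ℝ × ℝ → ℝ) (hψ : IsBarycentric p ψ)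
    (i : Fin 4) (j : Fin 3) :
    ∀ x : ℝ × ℝ,
      d3 (tvec p j) (tvec p j) (tvec p j) (phiM ψ i) x =
        if (i : ℕ) = (j : ℕ) then -6 / elen p j ^ 3 else 0 := by
  obtain ⟨hlin, hval⟩ := hψ
  choose a b c hab using hlin
  have hne : ∀ k : Fin 3, k - 1 ≠ k + 1 := by decide
  have hL : elen p j ≠ 0 := by
    have h1 : ψ (j - 1) (p (j - 1)) = 1 := by simpa using hval (j - 1) (j - 1)
    have h2 : ψ (j - 1) (p (j + 1)) = 0 := by simpa [hne j] using hval (j - 1) (j + 1)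
    have hpt : p (j - 1) ≠ p (j + 1) := by
      intro h; rw [h, h2] at h1; norm_num at h1
    have he : edgeVec p j ≠ 0 := fun h => hpt (sub_eq_zero.mp h)
    have hcomp : (edgeVec p j).1 ≠ 0 ∨ (edgeVec p j).2 ≠ 0 := by
      by_contra hc
      push_neg at hc
      exact he (Prod.ext hc.1 hc.2)
    have hpos : 0 < (edgeVec p j).1 ^ 2 + (edgeVec p j).2 ^ 2 := by
      rcases hcomp with h | h <;> positivity
    exact (Real.sqrt_pos.mpr hpos).ne'
  have hD : ∀ k : Fin 3, a k * (tvec p j).1 + b k * (tvec p j).2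
      = (elen p j)⁻¹ * ((if k = j - 1 then 1 else 0) - (if k = j + 1 then 1 else 0)) := by
    intro k
    have e1 : (tvec p j).1 = (elen p j)⁻¹ * ((p (j - 1)).1 - (p (j + 1)).1) := rfl
    have e2 : (tvec p j).2 = (elen p j)⁻¹ * ((p (j - 1)).2 - (p (j + 1)).2) := rfl
    have w1 : a k * (p (j - 1)).1 + b k * (p (j - 1)).2 + c k
        = if k = j - 1 then 1 else 0 := by rw [← hab k (p (j - 1))]; exact hval k (j - 1)
    have w2 : a k * (p (j + 1)).1 + b k * (p (j + 1)).2 + c k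
        = if k = j + 1 then 1 else 0 := by rw [← hab k (p (j + 1))]; exact hval k (j + 1)
    rw [e1, e2, ← w1, ← w2]
    ring
  intro x
  have hD2 := hD
  fin_cases i
  · have hfun : phiM ψ 0 = fun y : ℝ × ℝ =>
        (a 2*y.1+b 2*y.2+c 2) * (a 2*y.1+b 2*y.2+c 2) * (a 1*y.1+b 1*y.2+c 1) := by
      funext y
      show phiM3 ψ 0 y = _
      rw [phiM3]
      rw [show (0:Fin 3) - 1 = 2 by decide, show (0:Fin 3) + 1 = 1 by decide,
        hab 2 y, hab 1 y]
      ring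
    rw [show (⟨0, by omega⟩ : Fin 4) = 0 from rfl, hfun, d3_triple, hD 2, hD 1]
    fin_cases j <;> simp_all [show (-1:Fin 3) = 2 from by decide] <;> field_simp <;> ring
  · have hfun : phiM ψ 1 = fun y : ℝ × ℝ =>
        (a 0*y.1+b 0*y.2+c 0) * (a 0*y.1+b 0*y.2+c 0) * (a 2*y.1+b 2*y.2+c 2) := by
      funext y
      show phiM3 ψ 1 y = _
      rw [phiM3]
      rw [show (1:Fin 3) - 1 = 0 by decide, show (1:Fin 3) + 1 = 2 by decide,
        hab 0 y, hab 2 y]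
      ring
    rw [show (⟨1, by omega⟩ : Fin 4) = 1 from rfl, hfun, d3_triple, hD 0, hD 2]
    fin_cases j <;> simp_all [show (-1:Fin 3) = 2 from by decide] <;> field_simp <;> ring
  · have hfun : phiM ψ 2 = fun y : ℝ × ℝ =>
        (a 1*y.1+b 1*y.2+c 1) * (a 1*y.1+b 1*y.2+c 1) * (a 0*y.1+b 0*y.2+c 0) := by
      funext y
      show phiM3 ψ 2 y = _
      rw [phiM3]
      rw [show (2:Fin 3) - 1 = 1 by decide, show (2:Fin 3) + 1 = 0 by decide,
        hab 1 y, hab 0 y]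
      ring
    rw [show (⟨2, by omega⟩ : Fin 4) = 2 from rfl, hfun, d3_triple, hD 1, hD 0]
    fin_cases j <;> simp_all [show (-1:Fin 3) = 2 from by decide] <;> field_simp <;> ring
  · have hfun : phiM ψ 3 = fun y : ℝ × ℝ =>
        (a 0*y.1+b 0*y.2+c 0) * (a 1*y.1+b 1*y.2+c 1) * (a 2*y.1+b 2*y.2+c 2) := by
      funext y
      show phiM4 ψ y = _
      rw [phiM4, hab 0 y, hab 1 y, hab 2 y]
    rw [show (⟨3, by omega⟩ : Fin 4) = 3 from rfl, hfun, d3_triple, hD 0, hD 1, hD 2]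
    fin_cases j <;> simp_all [show (-1:Fin 3) = 2 from by decide, show ((3:Fin 4):ℕ) = 3 from rfl]
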